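/- For n = 2 and any I-labelled Young diagram λ with underlying partition λ of size d = d₀ + d₁ (where d_i counts boxes labelled i), one has ε(λ) = ((d₀ - d₁)² + ε(λ_{underlying}))/2, where ε of a partition μ (the n = 1 case) equals 2n(μ) + |μ| with n(μ) = ∑_k (k-1)μ_k. -/

import Mathlib

/-- Number of boxes labelled `i` among the first `k` columns. -/
def dcount (n : ℕ) (rows : List (ZMod n × ℕ)) (i : ZMod n) (k : ℕ) : ℕ :=
  (rows.map (fun r =>
    ((Finset.range (min r.2 k)).filter (fun (j : ℕ) => r.1 + (j : ZMod n) = i)).card)).sum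

/-- `ε(λ) = ∑_{rows R of λ} d_{(last label of R)}(λ^{≤|R|})`. -/
def epsMS (n : ℕ) (rows : List (ZMod n × ℕ)) : ℕ :=
  (rows.map (fun r => dcount n rows (r.1 + ((r.2 - 1 : ℕ) : ZMod n)) r.2)).sum

/-- Total number of boxes labelled `i`. -/
def dtot (n : ℕ) (rows : List (ZMod n × ℕ)) (i : ZMod n) : ℕ :=
  (rows.map (fun r =>
    ((Finset.range r.2).filter (fun (j : ℕ) => r.1 + (j : ZMod n) = i)).card)).sum

def Fc (a i : ZMod 2) (m : ℕ) : ℕ := if a = i then (m+1)/2 else m/2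

def ez (r : ZMod 2 × ℕ) : ℤ := if r.2 % 2 = 1 then (if r.1 = 0 then 1 else -1) else 0

lemma zmod2_cases (x : ZMod 2) : x = 0 ∨ x = 1 := by revert x; decide

lemma count_Fc (a i : ZMod 2) (m : ℕ) :
    ((Finset.range m).filter (fun (j : ℕ) => a + (j : ZMod 2) = i)).card = Fc a i m := by
  induction m with
  | zero => simp [Fc]
  | succ m ih =>
    rw [Finset.range_add_one, Finset.filter_insert]
    have hcast : ((m : ℕ) : ZMod 2) = ((m % 2 : ℕ) : ZMod 2) := (ZMod.natCast_mod m 2).symm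
    have key : Fc a i (m+1) = Fc a i m + (if a + (m : ZMod 2) = i then 1 else 0) := by
      rcases Nat.mod_two_eq_zero_or_one m with h | h <;>
      · rw [hcast, h]
        push_cast
        have hiff := (by decide :
          ∀ a i : ZMod 2, (a + (0:ZMod 2) = i ↔ a = i) ∧ (a + (1:ZMod 2) = i ↔ ¬ (a = i))) a i
        simp only [Fc]
        split_ifs with h1 h2 h2 <;> simp_all <;> omega
    split_ifs with h
    · rw [Finset.card_insert_of_notMem (by simp), ih, key, if_pos h]
    · rw [ih, key, if_neg h]; simp

set_option maxHeartbeats 2000000 in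
lemma pair_key (r s : ZMod 2 × ℕ) (hr : 0 < r.2) (hs : 0 < s.2) :
    (Fc s.1 (r.1 + ((r.2 - 1 : ℕ) : ZMod 2)) (min s.2 r.2) : ℤ)
      + (Fc r.1 (s.1 + ((s.2 - 1 : ℕ) : ZMod 2)) (min r.2 s.2) : ℤ)
      = (min r.2 s.2 : ℤ) + ez r * ez s := by
  obtain ⟨ra, rl⟩ := r; obtain ⟨sa, sl⟩ := s
  simp only at hr hs
  obtain ⟨rl, rfl⟩ := Nat.exists_eq_succ_of_ne_zero (Nat.pos_iff_ne_zero.mp hr)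
  obtain ⟨sl, rfl⟩ := Nat.exists_eq_succ_of_ne_zero (Nat.pos_iff_ne_zero.mp hs)
  simp only [ez, Fc, Nat.succ_sub_one]
  rw [show ((rl : ℕ) : ZMod 2) = ((rl % 2 : ℕ) : ZMod 2) from (ZMod.natCast_mod _ 2).symm,
      show ((sl : ℕ) : ZMod 2) = ((sl % 2 : ℕ) : ZMod 2) from (ZMod.natCast_mod _ 2).symm]
  rcases Nat.le_total sl rl with hle | hle <;>
    [ (rw [min_eq_left (by omega : sl + 1 ≤ rl + 1), min_eq_right (by omega : sl + 1 ≤ rl + 1)]);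
      (rw [min_eq_right (by omega : rl + 1 ≤ sl + 1), min_eq_left (by omega : rl + 1 ≤ sl + 1)])] <;>
  rcases Nat.mod_two_eq_zero_or_one rl with h1 | h1 <;>
  rcases Nat.mod_two_eq_zero_or_one sl with h2 | h2 <;>
  rw [h1, h2] <;>
  rcases zmod2_cases ra with hra | hra <;> rcases zmod2_cases sa with hsa | hsa <;>
  subst hra hsa <;>
  simp only [Nat.cast_one, Nat.cast_zero, Nat.cast_succ] <;>
  split_ifs <;>
  first
  | omega
  | (exfalso; simp_all (config := { decide := true }))

lemma Fc_add (a : ZMod 2) (m : ℕ) : Fc a 0 m + Fc a 1 m = m := by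
  rcases zmod2_cases a with h | h <;> subst h <;> simp only [Fc] <;>
    norm_num <;> omega

lemma Fc_sub (a : ZMod 2) (m : ℕ) : (Fc a 0 m : ℤ) - Fc a 1 m = ez (a, m) := by
  rcases zmod2_cases a with h | h <;> subst h <;> simp only [Fc, ez] <;>
    norm_num <;> split_ifs <;> omega

lemma list_sum_eq {α M : Type*} [AddCommMonoid M] (L : List α) (d : α) (f : α → M) :
    (L.map f).sum = ∑ i ∈ Finset.range L.length, f (L.getD i d) := by
  induction L with
  | nil => simp
  | cons x t ih =>
    rw [List.map_cons, List.sum_cons, List.length_cons, Finset.sum_range_succ']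
    simp [ih, add_comm]

lemma min_sum (l : ℕ → ℕ) (N : ℕ) (h : ∀ i j, i ≤ j → j < N → l j ≤ l i) :
    ∑ i ∈ Finset.range N, ∑ j ∈ Finset.range N, min (l i) (l j)
      = ∑ i ∈ Finset.range N, (2*i+1) * l i := by
  induction N with
  | zero => simp
  | succ n ih =>
    have hmin : ∀ i ∈ Finset.range n, min (l i) (l n) = l n := fun i hi =>
      min_eq_right (h i n (le_of_lt (Finset.mem_range.mp hi)) (Nat.lt_succ_self n))
    have hmin' : ∀ i ∈ Finset.range n, min (l n) (l i) = l n := fun i hi =>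
      min_eq_left (h i n (le_of_lt (Finset.mem_range.mp hi)) (Nat.lt_succ_self n))
    have step : ∑ i ∈ Finset.range n, ∑ j ∈ Finset.range (n+1), min (l i) (l j)
        = ∑ i ∈ Finset.range n, ((∑ j ∈ Finset.range n, min (l i) (l j)) + l n) :=
      Finset.sum_congr rfl (fun i hi => by rw [Finset.sum_range_succ, hmin i hi])
    rw [Finset.sum_range_succ (f := fun i => ∑ j ∈ Finset.range (n+1), min (l i) (l j)),
        step, Finset.sum_add_distrib, Finset.sum_const, Finset.card_range,
        ih (fun i j hij hj => h i j hij (by omega)),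
        Finset.sum_range_succ (f := fun j => min (l n) (l j)),
        Finset.sum_congr rfl hmin', Finset.sum_const, Finset.card_range, min_self,
        Finset.sum_range_succ (f := fun i => (2*i+1) * l i)]
    ring

theorem stmt_3 (rows : List (ZMod 2 × ℕ))
    (hsorted : (rows.map Prod.snd).Pairwise (· ≥ ·))
    (hpos : ∀ r ∈ rows, 0 < r.2)
    (d₀ d₁ : ℕ) (hd₀ : d₀ = dtot 2 rows 0) (hd₁ : d₁ = dtot 2 rows 1)
    (nμ : ℕ) (hnμ : nμ = ((rows.map Prod.snd).zipIdx.map (fun p => p.2 * p.1)).sum) :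
    (epsMS 2 rows : ℚ) = (((d₀ : ℚ) - (d₁ : ℚ)) ^ 2 + (2 * nμ + (d₀ + d₁))) / 2 := by
  set N := rows.length with hN
  set row : ℕ → ZMod 2 × ℕ := fun i => rows.getD i (0,0) with hrow
  set a : ℕ → ZMod 2 := fun i => (row i).1 with ha
  set l : ℕ → ℕ := fun i => (row i).2 with hl
  -- positivity
  have hposl : ∀ i, i < N → 0 < l i := by
    intro i hi
    show 0 < (rows.getD i (0,0)).2
    rw [List.getD_eq_getElem rows (0,0) hi]
    exact hpos _ (List.getElem_mem hi)
  -- sortedness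
  have hsort' : ∀ i j, i ≤ j → j < N → l j ≤ l i := by
    intro i j hij hj
    rcases eq_or_lt_of_le hij with rfl | hlt
    · exact le_refl _
    · have hi : i < N := lt_trans hlt hj
      have h2 := List.pairwise_iff_getElem.mp hsorted i j
        (by simpa using hi) (by simpa using hj) hlt
      simp only [List.getElem_map] at h2
      show (rows.getD j (0,0)).2 ≤ (rows.getD i (0,0)).2
      rw [List.getD_eq_getElem rows (0,0) hi, List.getD_eq_getElem rows (0,0) hj]
      exact h2
  -- dcount as a range sum
  have hdc : ∀ (t : ZMod 2) (k : ℕ),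
      dcount 2 rows t k = ∑ j ∈ Finset.range N, Fc (a j) t (min (l j) k) := by
    intro t k
    rw [dcount, list_sum_eq _ (0,0)]
    exact Finset.sum_congr rfl (fun j _ => count_Fc _ _ _)
  -- dtot as a range sum
  have hdt : ∀ (t : ZMod 2),
      dtot 2 rows t = ∑ j ∈ Finset.range N, Fc (a j) t (l j) := by
    intro t
    rw [dtot, list_sum_eq _ (0,0)]
    exact Finset.sum_congr rfl (fun j _ => count_Fc _ _ _)
  -- epsMS as a double range sum
  have heps : (epsMS 2 rows : ℤ)
      = ∑ i ∈ Finset.range N, ∑ j ∈ Finset.range N,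
          (Fc (a j) (a i + ((l i - 1 : ℕ) : ZMod 2)) (min (l j) (l i)) : ℤ) := by
    rw [epsMS, list_sum_eq _ (0,0)]
    push_cast
    exact Finset.sum_congr rfl (fun i _ => by rw [hdc]; push_cast; rfl)
  -- nμ as a range sum
  have hnμ' : nμ = ∑ i ∈ Finset.range N, i * l i := by
    rw [hnμ, list_sum_eq _ (0,0)]
    have hlen : (rows.map Prod.snd).zipIdx.length = N := by simp [hN]
    rw [hlen]
    refine Finset.sum_congr rfl (fun i hi => ?_)
    have hi' : i < N := Finset.mem_range.mp hi
    rw [List.getD_eq_getElem _ (0,0) (by simpa using hi'), List.getElem_zipIdx, Nat.zero_add,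
        List.getElem_map]
    show i * rows[i].2 = i * (rows.getD i (0,0)).2
    rw [List.getD_eq_getElem rows (0,0) hi']
  -- the main integer identity
  have key : 2 * (epsMS 2 rows : ℤ)
      = ((d₀ : ℤ) - (d₁ : ℤ))^2 + (2 * nμ + (d₀ + d₁)) := by
    have hswap : (epsMS 2 rows : ℤ)
        = ∑ i ∈ Finset.range N, ∑ j ∈ Finset.range N,
            (Fc (a i) (a j + ((l j - 1 : ℕ) : ZMod 2)) (min (l i) (l j)) : ℤ) := by
      rw [heps]; exact Finset.sum_comm
    have hsum : 2 * (epsMS 2 rows : ℤ)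
        = ∑ i ∈ Finset.range N, ∑ j ∈ Finset.range N,
            ((min (l i) (l j) : ℤ) + ez (row i) * ez (row j)) := by
      rw [two_mul]
      nth_rewrite 1 [heps]
      nth_rewrite 1 [hswap]
      rw [← Finset.sum_add_distrib]
      refine Finset.sum_congr rfl (fun i hi => ?_)
      rw [← Finset.sum_add_distrib]
      refine Finset.sum_congr rfl (fun j hj => ?_)
      exact pair_key (row i) (row j)
        (hposl i (Finset.mem_range.mp hi)) (hposl j (Finset.mem_range.mp hj))
    rw [hsum]
    simp only [Finset.sum_add_distrib]
    have hmins : ∑ i ∈ Finset.range N, ∑ j ∈ Finset.range N, (min ((l i : ℤ)) ((l j : ℤ)))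
        = 2 * nμ + (∑ i ∈ Finset.range N, (l i : ℤ)) := by
      have := min_sum l N hsort'
      have hc := congrArg (Nat.cast : ℕ → ℤ) this
      push_cast at hc
      rw [hc, hnμ']
      push_cast
      rw [Finset.mul_sum, ← Finset.sum_add_distrib]
      exact Finset.sum_congr rfl (fun i _ => by ring)
    have hee : ∑ i ∈ Finset.range N, ∑ j ∈ Finset.range N, ez (row i) * ez (row j)
        = (∑ i ∈ Finset.range N, ez (row i))^2 := by
      rw [sq, Finset.sum_mul_sum]
    have hdsub : (d₀ : ℤ) - (d₁ : ℤ) = ∑ i ∈ Finset.range N, ez (row i) := by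
      rw [hd₀, hd₁, hdt 0, hdt 1]
      push_cast
      rw [← Finset.sum_sub_distrib]
      refine Finset.sum_congr rfl (fun j _ => ?_)
      exact Fc_sub (a j) (l j)
    have hdadd : (d₀ : ℤ) + (d₁ : ℤ) = ∑ i ∈ Finset.range N, (l i : ℤ) := by
      rw [hd₀, hd₁, hdt 0, hdt 1]
      push_cast
      rw [← Finset.sum_add_distrib]
      refine Finset.sum_congr rfl (fun j _ => ?_)
      exact_mod_cast congrArg (Nat.cast : ℕ → ℤ) (Fc_add (a j) (l j))
    rw [hmins, hee, ← hdsub, ← hdadd]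
    ring
  have key' := congrArg (fun z : ℤ => (z : ℚ)) key
  push_cast at key'
  rw [eq_div_iff (by norm_num : (2:ℚ) ≠ 0)]
  linarith
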